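/- Implementation of equality from a non-mergeable witness: let R ⊆ (Fin r → Bool) and let α, β, γ, δ ∈ R satisfy α ∧ δ ≤ β ≤ α and β ∧ γ ≤ δ ≤ γ, with σ := α ∧ (β ∨ γ) ∉ R. For Booleans a, b define the tuple τ(a,b) : Fin r → Bool by τ(a,b) i = true if β i = true; τ(a,b) i = false if α i = false; τ(a,b) i = a if β i = false and σ i = true; and τ(a,b) i = b if σ i = false and α i = true. Then for all a, b : Bool, (τ(a,b) ∈ R ∧ τ(b,a) ∈ R) holds if and only if a = b; i.e., the conjunction R(τ(x,y)) ∧ R(τ(y,x)) implements the equality constraint (x = y). -/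
import Mathlib


/-- The tuple `τ(a,b)` built from a witness `(α, β, σ)` with `β ≤ σ ≤ α`:
true where `β` is true, false where `α` is false, `a` where `β` is false but `σ`
is true, and `b` where `σ` is false but `α` is true. -/
def tau {r : ℕ} (α β σ : Fin r → Bool) (a b : Bool) : Fin r → Bool :=
  fun i =>
    if β i = true then true
    else if α i = false then false
    else if σ i = true then a
    else b

theorem stmt_15 {r : ℕ} (R : Set (Fin r → Bool)) (α β γ δ : Fin r → Bool)
    (hα : α ∈ R) (hβ : β ∈ R) (hγ : γ ∈ R) (hδ : δ ∈ R)
    (h1 : ∀ i, (α i && δ i) ≤ β i) (h2 : ∀ i, β i ≤ α i)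
    (h3 : ∀ i, (β i && γ i) ≤ δ i) (h4 : ∀ i, δ i ≤ γ i)
    (hσ : (fun i => α i && (β i || γ i)) ∉ R) :
    ∀ a b : Bool,
      (tau α β (fun i => α i && (β i || γ i)) a b ∈ R ∧
        tau α β (fun i => α i && (β i || γ i)) b a ∈ R) ↔ a = b := by
  set σ : Fin r → Bool := fun i => α i && (β i || γ i) with hσdef
  have e1 : tau α β σ true true = α := by
    funext i; have h := h2 i; unfold tau; revert h
    cases β i <;> cases α i <;> cases σ i <;> decide
  have e2 : tau α β σ false false = β := by
    funext i; have h := h2 i; unfold tau; revert h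
    cases β i <;> cases α i <;> cases σ i <;> decide
  have e3 : tau α β σ true false = σ := by
    funext i; have h := h2 i; unfold tau; simp only [hσdef]; revert h
    cases β i <;> cases α i <;> cases γ i <;> decide
  intro a b
  constructor
  · rintro ⟨ht1, ht2⟩
    cases a <;> cases b <;> simp_all [e3]
  · rintro rfl
    cases a <;> simp [e1, e2, hα, hβ]
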